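/- Let V be a finite set with weights w : V × V → [0,1] satisfying w(u,v) + w(v,u) = 1 for all distinct u,v. For a ranking π of V, vertex v, and non-integer real p, define b(π,v,p) = Σ_{u ≠ v} (w(v,u) if p > π(u), w(u,v) if p < π(u)). Then for any two rankings π, π' of V, any v, and any non-integer p: |b(π,v,p) − b(π',v,p)| ≤ 2√(d(π,π')), where d is the Kendall-Tau distance. -/

import Mathlib

noncomputable def pos {V : Type*} [Fintype V] (π : V ≃ Fin (Fintype.card V)) (v : V) : ℝ :=
  ((π v : ℕ) : ℝ) + 1

def kendall {V : Type*} [Fintype V] (π π' : V ≃ Fin (Fintype.card V)) : ℕ :=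
  (Finset.univ.filter (fun uv : V × V => π uv.1 < π uv.2 ∧ π' uv.2 < π' uv.1)).card

/-- Weight of arcs incident to `v` that become backwards when `v` is placed at
position `p` in ranking `π`. -/
noncomputable def bwt {V : Type*} [Fintype V] [DecidableEq V] (w : V → V → ℝ)
    (π : V ≃ Fin (Fintype.card V)) (v : V) (p : ℝ) : ℝ :=
  ∑ u ∈ Finset.univ.erase v, if pos π u < p then w v u else w u v

theorem stmt4 {V : Type*} [Fintype V] [DecidableEq V] (w : V → V → ℝ)
    (h01 : ∀ u v : V, 0 ≤ w u v ∧ w u v ≤ 1)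
    (hsum : ∀ u v : V, u ≠ v → w u v + w v u = 1)
    (π π' : V ≃ Fin (Fintype.card V)) (v : V) (p : ℝ) (hp : ∀ z : ℤ, (z : ℝ) ≠ p) :
    |bwt w π v p - bwt w π' v p| ≤ 2 * Real.sqrt (kendall π π') := by
  classical
  -- positions never equal p
  have hne : ∀ (σ : V ≃ Fin (Fintype.card V)) (u : V), pos σ u ≠ p := by
    intro σ u
    have := hp ((σ u : ℕ) + 1)
    push_cast at this
    simpa [pos] using this
  have htri : ∀ (σ : V ≃ Fin (Fintype.card V)) (u : V), p < pos σ u ↔ ¬ pos σ u < p := by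
    intro σ u
    constructor
    · exact fun h => not_lt.2 h.le
    · intro h
      rcases lt_or_gt_of_ne (hne σ u) with h' | h'
      · exact absurd h' h
      · exact h'
  set A : Finset V := Finset.univ.filter (fun u => pos π u < p ∧ p < pos π' u) with hA
  set B : Finset V := Finset.univ.filter (fun u => pos π' u < p ∧ p < pos π u) with hB
  set L : Finset V := Finset.univ.filter (fun u => pos π u < p) with hL
  set L' : Finset V := Finset.univ.filter (fun u => pos π' u < p) with hL'
  -- both rankings put the same number of elements below p
  have hLL' : L.card = L'.card := by
    apply Finset.card_bij' (fun u _ => π'.symm (π u)) (fun u _ => π.symm (π' u))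
    · intro u hu
      simp only [hL, hL', Finset.mem_filter, Finset.mem_univ, true_and, pos,
        Equiv.apply_symm_apply] at hu ⊢
      exact Finset.mem_filter.mpr ⟨Finset.mem_univ _, by simpa using (Finset.mem_filter.mp hu).2⟩
    · intro u hu
      simp only [hL, hL', Finset.mem_filter, Finset.mem_univ, true_and, pos,
        Equiv.apply_symm_apply] at hu ⊢
      exact Finset.mem_filter.mpr ⟨Finset.mem_univ _, by simpa using (Finset.mem_filter.mp hu).2⟩
    · intro u _; simp
    · intro u _; simp
  have hAs : A = L \ L' := by
    ext u
    simp only [hA, hL, hL', Finset.mem_sdiff, Finset.mem_filter, Finset.mem_univ, true_and,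
      htri π' u]
  have hBs : B = L' \ L := by
    ext u
    simp only [hB, hL, hL', Finset.mem_sdiff, Finset.mem_filter, Finset.mem_univ, true_and,
      htri π u]
  have hcard1 : A.card + (L ∩ L').card = L.card := by
    rw [hAs]; exact Finset.card_sdiff_add_card_inter L L'
  have hcard2 : B.card + (L ∩ L').card = L'.card := by
    rw [hBs, Finset.inter_comm]; exact Finset.card_sdiff_add_card_inter L' L
  have hAB : A.card = B.card := by omega
  -- each pair in A × B is a discordant pair
  have hsub : A ×ˢ B ⊆ Finset.univ.filter
      (fun uv : V × V => π uv.1 < π uv.2 ∧ π' uv.2 < π' uv.1) := by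
    intro uv huv
    rw [Finset.mem_product] at huv
    obtain ⟨h1, h2⟩ := huv
    simp only [hA, Finset.mem_filter, Finset.mem_univ, true_and] at h1
    simp only [hB, Finset.mem_filter, Finset.mem_univ, true_and] at h2
    simp only [Finset.mem_filter, Finset.mem_univ, true_and]
    constructor
    · have : ((π uv.1 : ℕ) : ℝ) + 1 < ((π uv.2 : ℕ) : ℝ) + 1 := lt_trans h1.1 h2.2
      have : (π uv.1 : ℕ) < (π uv.2 : ℕ) := by exact_mod_cast (by linarith : ((π uv.1 : ℕ) : ℝ) < ((π uv.2 : ℕ) : ℝ))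
      exact this
    · have : ((π' uv.2 : ℕ) : ℝ) + 1 < ((π' uv.1 : ℕ) : ℝ) + 1 := lt_trans h2.1 h1.2
      have : (π' uv.2 : ℕ) < (π' uv.1 : ℕ) := by exact_mod_cast (by linarith : ((π' uv.2 : ℕ) : ℝ) < ((π' uv.1 : ℕ) : ℝ))
      exact this
  have hkd : A.card * B.card ≤ kendall π π' := by
    rw [← Finset.card_product]
    exact Finset.card_le_card hsub
  -- hence A.card ≤ sqrt kendall
  have hsq : (A.card : ℝ) ≤ Real.sqrt (kendall π π') := by
    have h1 : ((A.card : ℝ)) ^ 2 ≤ (kendall π π' : ℝ) := by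
      rw [sq]
      have h2 : A.card * A.card ≤ kendall π π' :=
        le_trans (le_of_eq (by rw [hAB])) hkd
      exact_mod_cast h2
    calc (A.card : ℝ) = Real.sqrt ((A.card : ℝ) ^ 2) := (Real.sqrt_sq (by positivity)).symm
      _ ≤ Real.sqrt (kendall π π') := Real.sqrt_le_sqrt h1
  -- bound the difference of the two sums
  have hdisj : Disjoint A B := by
    rw [hAs, hBs]
    exact disjoint_sdiff_sdiff
  have hbound : |bwt w π v p - bwt w π' v p| ≤ (A.card : ℝ) + (B.card : ℝ) := by
    rw [bwt, bwt, ← Finset.sum_sub_distrib]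
    calc |∑ u ∈ Finset.univ.erase v,
          ((if pos π u < p then w v u else w u v) - (if pos π' u < p then w v u else w u v))|
        ≤ ∑ u ∈ Finset.univ.erase v,
          |(if pos π u < p then w v u else w u v) - (if pos π' u < p then w v u else w u v)| :=
          Finset.abs_sum_le_sum_abs _ _
      _ ≤ ∑ u ∈ Finset.univ.erase v, (if u ∈ A ∪ B then (1 : ℝ) else 0) := by
          apply Finset.sum_le_sum
          intro u _
          by_cases h1 : pos π u < p <;> by_cases h2 : pos π' u < p
          · simp [h1, h2]
            split <;> norm_num
          · have hu : u ∈ A ∪ B := by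
              simp [hA, Finset.mem_union, Finset.mem_filter, h1, (htri π' u).2 h2]
            simp only [h1, h2, if_true, if_false, hu]
            have := h01 v u; have := h01 u v
            rw [abs_sub_le_iff]; constructor <;> linarith
          · have hu : u ∈ A ∪ B := by
              simp [hB, Finset.mem_union, Finset.mem_filter, h2, (htri π u).2 h1]
            simp only [h1, h2, if_true, if_false, hu]
            have := h01 v u; have := h01 u v
            rw [abs_sub_le_iff]; constructor <;> linarith
          · simp [h1, h2]
            split <;> norm_num
      _ = (((Finset.univ.erase v).filter (· ∈ A ∪ B)).card : ℝ) := by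
          rw [Finset.sum_boole]
      _ ≤ ((A ∪ B).card : ℝ) := by
          exact_mod_cast Finset.card_le_card
            (fun u hu => (Finset.mem_filter.mp hu).2)
      _ ≤ (A.card : ℝ) + (B.card : ℝ) := by
          exact_mod_cast Finset.card_union_le A B
  calc |bwt w π v p - bwt w π' v p| ≤ (A.card : ℝ) + (B.card : ℝ) := hbound
    _ = 2 * (A.card : ℝ) := by rw [hAB]; push_cast; ring
    _ ≤ 2 * Real.sqrt (kendall π π') := by linarith
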